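/- Let R be an r×r matrix whose entries differ from those of a matrix R(T) by at most ε₀ in absolute value, where every row of R(T) has ℓ1 norm at least 1/(ar) and the row-normalized version of R(T) has ℓ1 condition number at least γ. If ε₀ < γ/(4ar²), then the row-normalized version of R has ℓ1 condition number at least γ/2. -/

import Mathlib

open Matrix BigOperators

/-- entrywise ℓ1 norm of a vector -/
noncomputable def l1 {k : ℕ} (v : Fin k → ℝ) : ℝ := ∑ i, |v i|

/-- row-normalized version of a matrix: each row is rescaled to sum to 1 -/
noncomputable def normRows {r : ℕ} (B : Matrix (Fin r) (Fin r) ℝ) :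
    Matrix (Fin r) (Fin r) ℝ :=
  fun i j => B i j / ∑ k, B i k

theorem stmt19 (r : ℕ) (hr : 0 < r) (RT R : Matrix (Fin r) (Fin r) ℝ)
    (a γ ε₀ : ℝ) (ha : 1 ≤ a) (hγ : 0 < γ) (hε₀ : 0 ≤ ε₀)
    (hRTpos : ∀ i j, 0 ≤ RT i j) (hRpos : ∀ i j, 0 ≤ R i j)
    (hclose : ∀ i j, |R i j - RT i j| ≤ ε₀)
    (hrowsum : ∀ i, 1 / (a * r) ≤ ∑ k, RT i k)
    (hcond : ∀ x : Fin r → ℝ, l1 x = 1 → γ ≤ l1 (x ᵥ* normRows RT))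
    (hεsmall : ε₀ < γ / (4 * a * r ^ 2)) :
    ∀ x : Fin r → ℝ, l1 x = 1 → γ / 2 ≤ l1 (x ᵥ* normRows R) := by
  intro x hx
  set s : Fin r → ℝ := fun i => ∑ k, RT i k with hs
  set s' : Fin r → ℝ := fun i => ∑ k, R i k with hs'
  have hrpos : (0:ℝ) < r := by exact_mod_cast hr
  have har : (0:ℝ) < a * r := mul_pos (lt_of_lt_of_le one_pos ha) hrpos
  have hspos : ∀ i, 0 < s i := fun i => lt_of_lt_of_le (by positivity) (hrowsum i)
  have hub : ∀ i, 1 ≤ a * r * s i := by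
    intro i
    have h := hrowsum i
    rw [div_le_iff₀ har] at h
    nlinarith [h]
  have hinv : ∀ i, 1 / s i ≤ a * r := by
    intro i
    rw [div_le_iff₀ (hspos i)]
    linarith [hub i]
  have hdiff : ∀ i, |s' i - s i| ≤ r * ε₀ := by
    intro i
    have heq : s' i - s i = ∑ k, (R i k - RT i k) := by
      simp [hs, hs', Finset.sum_sub_distrib]
    rw [heq]
    calc |∑ k, (R i k - RT i k)| ≤ ∑ k, |R i k - RT i k| :=
          Finset.abs_sum_le_sum_abs _ _
      _ ≤ ∑ _k : Fin r, ε₀ := Finset.sum_le_sum fun k _ => hclose i k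
      _ = r * ε₀ := by simp [mul_comm]
  -- γ ≤ 1
  have hγ1 : γ ≤ 1 := by
    set i0 : Fin r := ⟨0, hr⟩
    set e : Fin r → ℝ := fun i => if i = i0 then 1 else 0 with he
    have hle : l1 e = 1 := by simp [l1, he, apply_ite abs]
    have h := hcond e hle
    have hv : ∀ j, (e ᵥ* normRows RT) j = normRows RT i0 j := by
      intro j
      simp [vecMul, dotProduct, he, ite_mul]
    have hone : l1 (e ᵥ* normRows RT) = 1 := by
      simp only [l1, hv, normRows]
      have habs : ∀ j : Fin r, |RT i0 j / ∑ k, RT i0 k| = RT i0 j / ∑ k, RT i0 k :=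
        fun j => abs_of_nonneg (div_nonneg (hRTpos i0 j) (hspos i0).le)
      rw [Finset.sum_congr rfl fun j _ => habs j, ← Finset.sum_div]
      exact div_self (hspos i0).ne'
    linarith [hone ▸ h]
  have hkey : ε₀ * (4 * a * r ^ 2) < γ := by
    rw [← lt_div_iff₀ (by positivity)]
    exact hεsmall
  have hs'pos : ∀ i, 0 < s' i := by
    intro i
    have h1 := (abs_le.mp (hdiff i)).1
    nlinarith [hub i, hkey, har, hspos i]
  -- per-row bound
  have hrow : ∀ i, ∑ j, |normRows R i j - normRows RT i j| ≤ 2 * (r * ε₀) * (a * r) := by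
    intro i
    have hsn := (hspos i).ne'
    have hsn' := (hs'pos i).ne'
    have h1 : ∀ j, |normRows R i j - normRows RT i j| ≤
        |R i j - RT i j| / s i + R i j * |1 / s' i - 1 / s i| := by
      intro j
      have heq : normRows R i j - normRows RT i j =
          (R i j - RT i j) / s i + R i j * (1 / s' i - 1 / s i) := by
        simp only [normRows, ← hs, ← hs']
        field_simp
        have e1 : (∑ k, R i k)⁻¹ * s' i = 1 := inv_mul_cancel₀ hsn'
        have e2 : (∑ k, RT i k)⁻¹ * s i = 1 := inv_mul_cancel₀ hsn
        linear_combination (R i j * s i) * e1 - (RT i j * s' i) * e2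
      rw [heq]
      calc |(R i j - RT i j) / s i + R i j * (1 / s' i - 1 / s i)| ≤
            |(R i j - RT i j) / s i| + |R i j * (1 / s' i - 1 / s i)| := abs_add_le _ _
        _ = |R i j - RT i j| / s i + R i j * |1 / s' i - 1 / s i| := by
            rw [abs_div, abs_of_pos (hspos i), abs_mul, abs_of_nonneg (hRpos i j)]
    have h2 : |1 / s' i - 1 / s i| = |s i - s' i| / (s' i * s i) := by
      rw [div_sub_div _ _ hsn' hsn]
      have : 1 * s i - s' i * 1 = s i - s' i := by ring
      rw [this, abs_div, abs_of_pos (mul_pos (hs'pos i) (hspos i))]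
    have hA : (∑ j, |R i j - RT i j|) ≤ r * ε₀ := by
      calc (∑ j, |R i j - RT i j|) ≤ ∑ _j : Fin r, ε₀ :=
            Finset.sum_le_sum fun j _ => hclose i j
        _ = r * ε₀ := by simp [mul_comm]
    have hB : |s i - s' i| ≤ r * ε₀ := by rw [abs_sub_comm]; exact hdiff i
    calc ∑ j, |normRows R i j - normRows RT i j|
        ≤ ∑ j, (|R i j - RT i j| / s i + R i j * |1 / s' i - 1 / s i|) :=
          Finset.sum_le_sum fun j _ => h1 j
      _ = (∑ j, |R i j - RT i j|) / s i + s' i * |1 / s' i - 1 / s i| := by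
          rw [Finset.sum_add_distrib, ← Finset.sum_div, ← Finset.sum_mul]
      _ = (∑ j, |R i j - RT i j|) / s i + |s i - s' i| / s i := by
          rw [h2]; field_simp
      _ ≤ (r * ε₀) / s i + (r * ε₀) / s i := by
          exact add_le_add ((div_le_div_iff_of_pos_right (hspos i)).mpr hA)
            ((div_le_div_iff_of_pos_right (hspos i)).mpr hB)
      _ = 2 * (r * ε₀) * (1 / s i) := by ring
      _ ≤ 2 * (r * ε₀) * (a * r) :=
          mul_le_mul_of_nonneg_left (hinv i) (by positivity)
  -- perturbation bound on l1
  have hx' : (∑ i, |x i|) = 1 := hx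
  have hbound : ∑ j, |(x ᵥ* normRows RT) j - (x ᵥ* normRows R) j| ≤
      2 * (r * ε₀) * (a * r) := by
    have h1 : ∀ j, |(x ᵥ* normRows RT) j - (x ᵥ* normRows R) j| ≤
        ∑ i, |x i| * |normRows R i j - normRows RT i j| := by
      intro j
      have he : (x ᵥ* normRows RT) j - (x ᵥ* normRows R) j
          = ∑ i, x i * (normRows RT i j - normRows R i j) := by
        simp [vecMul, dotProduct, Finset.sum_sub_distrib, mul_sub]
      rw [he]
      refine (Finset.abs_sum_le_sum_abs _ _).trans
        (Finset.sum_le_sum fun i _ => ?_)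
      rw [abs_mul, abs_sub_comm]
    calc ∑ j, |(x ᵥ* normRows RT) j - (x ᵥ* normRows R) j|
        ≤ ∑ j, ∑ i, |x i| * |normRows R i j - normRows RT i j| :=
          Finset.sum_le_sum fun j _ => h1 j
      _ = ∑ i, |x i| * ∑ j, |normRows R i j - normRows RT i j| := by
          rw [Finset.sum_comm]; simp [Finset.mul_sum]
      _ ≤ ∑ i, |x i| * (2 * (r * ε₀) * (a * r)) :=
          Finset.sum_le_sum fun i _ =>
            mul_le_mul_of_nonneg_left (hrow i) (abs_nonneg _)
      _ = 2 * (r * ε₀) * (a * r) := by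
          rw [← Finset.sum_mul, hx', one_mul]
  have hpert : l1 (x ᵥ* normRows RT) ≤ l1 (x ᵥ* normRows R) +
      ∑ j, |(x ᵥ* normRows RT) j - (x ᵥ* normRows R) j| := by
    unfold l1
    rw [← Finset.sum_add_distrib]
    refine Finset.sum_le_sum fun j _ => ?_
    have h := abs_sub_abs_le_abs_sub ((x ᵥ* normRows RT) j) ((x ᵥ* normRows R) j)
    linarith
  have h2ar : 2 * (r * ε₀) * (a * r) ≤ γ / 2 := by nlinarith [hkey]
  linarith [hcond x hx, hpert, hbound]
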